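/- arXiv:math/0511524 — 2 statements merged into one kernel-verified Lean document; each statement's English description precedes it below -/
import Mathlib

section
/- Let V = ⊕_{j∈ℤ}V_j be a quasifinite 𝒟̂^N-module and let v₀ ∈ V_0 be a nonzero vector with t·v₀ = 0, where t = t¹D⁰I. Then there exists an integer n > 0 such that (𝒟̂^N)_j v₀ = 0 for all j ≥ nN. -/
noncomputable section

open scoped BigOperators

/-- Falling factorial `[b]_s = b(b-1)⋯(b-s+1)` of an integer `b`. -/
def dfall (b : ℤ) (s : ℕ) : ℤ := ∏ i ∈ Finset.range s, (b - (i : ℤ))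

/-- Generalized binomial coefficient `binom(a, n)` as a complex number, for `a : ℤ`, `n : ℕ`. -/
def cbinom (a : ℤ) (n : ℕ) : ℂ :=
  (∏ i ∈ Finset.range n, ((a : ℂ) - (i : ℂ))) / (n.factorial : ℂ)

/-- The coefficient `δ_{i,-k} (-1)^j j! l! binom(i+j, j+l+1)` of the central element in the
bracket of `t^a (d/dt)^j A = t^i [D]_j A` (with `a = i + j`) and `t^b (d/dt)^l B = t^k [D]_l B`
(with `b = k + l`); it is still to be multiplied by `tr (AB)`. -/
def cocycleCoeff (a : ℤ) (j : ℕ) (b : ℤ) (l : ℕ) : ℂ :=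
  if a + b = (j : ℤ) + (l : ℤ) then
    (-1 : ℂ) ^ j * (j.factorial : ℂ) * (l.factorial : ℂ) * cbinom a (j + l + 1)
  else 0

/-- A module over the universal central extension `𝒟̂^N` of the Lie algebra of `N × N`-matrix
differential operators on the circle, presented through the action `ρ a j A` of the basis
elements `t^a (d/dt)^j A = t^{a-j} [D]_j A` (`a ∈ ℤ`, `j ∈ ℕ`, `A ∈ gl_N(ℂ)`) together with the
action `cC` of the central element `C`, subject to bilinearity in `A` and the commutation
relations (2.3)/(3.12) of the paper. -/
structure DhatModule (N : ℕ) (V : Type*) [AddCommGroup V] [Module ℂ V] where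
  ρ : ℤ → ℕ → Matrix (Fin N) (Fin N) ℂ → Module.End ℂ V
  cC : Module.End ℂ V
  ρ_add : ∀ a j A B, ρ a j (A + B) = ρ a j A + ρ a j B
  ρ_smul : ∀ a j (c : ℂ) A, ρ a j (c • A) = c • ρ a j A
  cC_comm : ∀ a j A, cC * ρ a j A = ρ a j A * cC
  bracket_rel : ∀ (a : ℤ) (j : ℕ) (A : Matrix (Fin N) (Fin N) ℂ) (b : ℤ) (l : ℕ)
      (B : Matrix (Fin N) (Fin N) ℂ),
    ρ a j A * ρ b l B - ρ b l B * ρ a j A =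
      ((∑ s ∈ Finset.range (j + 1),
        ((j.choose s : ℂ) * (dfall b s : ℂ)) • ρ (a + b - (s : ℤ)) (j + l - s) (A * B))
      - (∑ s ∈ Finset.range (l + 1),
        ((l.choose s : ℂ) * (dfall a s : ℂ)) • ρ (a + b - (s : ℤ)) (j + l - s) (B * A)))
      + (cocycleCoeff a j b l * (A * B).trace) • cC

namespace DhatModule

variable {N : ℕ} {V : Type*} [AddCommGroup V] [Module ℂ V]

/-- A subspace invariant under the `𝒟̂^N`-action. -/
def IsSub (M : DhatModule N V) (U : Submodule ℂ V) : Prop :=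
  (∀ a j A, ∀ v ∈ U, M.ρ a j A v ∈ U) ∧ ∀ v ∈ U, M.cC v ∈ U

/-- The module is trivial: `𝒟̂^N` acts by zero. -/
def IsTrivial (M : DhatModule N V) : Prop :=
  (∀ a j A (v : V), M.ρ a j A v = 0) ∧ ∀ v : V, M.cC v = 0

/-- Irreducibility: the module is nonzero and has no invariant subspace besides `⊥` and `⊤`. -/
def IsIrreducible (M : DhatModule N V) : Prop :=
  (⊥ : Submodule ℂ V) ≠ ⊤ ∧ ∀ U : Submodule ℂ V, M.IsSub U → U = ⊥ ∨ U = ⊤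

/-- Indecomposability: the module is nonzero and is not the direct sum of two nonzero
invariant subspaces. -/
def IsIndecomposable (M : DhatModule N V) : Prop :=
  (⊥ : Submodule ℂ V) ≠ ⊤ ∧ ∀ U W : Submodule ℂ V, M.IsSub U → M.IsSub W →
    U ⊓ W = ⊥ → U ⊔ W = ⊤ → U = ⊥ ∨ W = ⊥

end DhatModule

/-- The degree of the basis element `t^a (d/dt)^j E_{p,q} = t^{a-j} [D]_j E_{p,q}` in the
principal `ℤ`-gradation of `𝒟̂^N`, namely `(a - j) N + p - q` (here `p, q ∈ Fin N` correspond
to `p+1, q+1 ∈ [1,N]`). -/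
def gdeg (N : ℕ) (a : ℤ) (j : ℕ) (p q : Fin N) : ℤ :=
  (a - (j : ℤ)) * (N : ℤ) + (p.val : ℤ) - (q.val : ℤ)

/-- A `ℤ`-graded `𝒟̂^N`-module, graded compatibly with the principal gradation of `𝒟̂^N`. -/
structure GradedDhatModule (N : ℕ) (V : Type*) [AddCommGroup V] [Module ℂ V]
    extends DhatModule N V where
  grade : ℤ → Submodule ℂ V
  isInternal : DirectSum.IsInternal grade
  grade_ρ : ∀ (a : ℤ) (j : ℕ) (p q : Fin N) (d : ℤ), ∀ v ∈ grade d,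
    ρ a j (Matrix.single p q 1) v ∈ grade (d + gdeg N a j p q)
  grade_cC : ∀ (d : ℤ), ∀ v ∈ grade d, cC v ∈ grade d

namespace GradedDhatModule

variable {N : ℕ} {V : Type*} [AddCommGroup V] [Module ℂ V]

/-- Quasifiniteness: every graded component is finite-dimensional. -/
def IsQuasifinite (G : GradedDhatModule N V) : Prop :=
  ∀ d : ℤ, FiniteDimensional ℂ (G.grade d)

/-- Uniformly bounded: the dimensions of the graded components are uniformly bounded. -/
def IsUniformlyBounded (G : GradedDhatModule N V) : Prop :=
  ∃ K : ℕ, ∀ d : ℤ, Module.rank ℂ (G.grade d) ≤ (K : Cardinal)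

/-- Module of the intermediate series: all graded components have dimension at most `1`. -/
def IsIntermediateSeries (G : GradedDhatModule N V) : Prop :=
  ∀ d : ℤ, Module.rank ℂ (G.grade d) ≤ 1

/-- A highest weight vector: homogeneous, nonzero, with `(𝒟̂^N)₀ v ⊆ ℂ v` and
`(𝒟̂^N)₊ v = 0`. -/
def IsHWVector (G : GradedDhatModule N V) (v : V) : Prop :=
  v ≠ 0 ∧ (∃ d : ℤ, v ∈ G.grade d) ∧
  (∀ (a : ℤ) (j : ℕ) (p q : Fin N), gdeg N a j p q = 0 →
    ∃ c : ℂ, G.ρ a j (Matrix.single p q 1) v = c • v) ∧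
  (∃ c : ℂ, G.cC v = c • v) ∧
  (∀ (a : ℤ) (j : ℕ) (p q : Fin N), 0 < gdeg N a j p q →
    G.ρ a j (Matrix.single p q 1) v = 0)

/-- A lowest weight vector: homogeneous, nonzero, with `(𝒟̂^N)₀ v ⊆ ℂ v` and
`(𝒟̂^N)₋ v = 0`. -/
def IsLWVector (G : GradedDhatModule N V) (v : V) : Prop :=
  v ≠ 0 ∧ (∃ d : ℤ, v ∈ G.grade d) ∧
  (∀ (a : ℤ) (j : ℕ) (p q : Fin N), gdeg N a j p q = 0 →
    ∃ c : ℂ, G.ρ a j (Matrix.single p q 1) v = c • v) ∧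
  (∃ c : ℂ, G.cC v = c • v) ∧
  (∀ (a : ℤ) (j : ℕ) (p q : Fin N), gdeg N a j p q < 0 →
    G.ρ a j (Matrix.single p q 1) v = 0)

/-- A highest weight module: generated by a highest weight vector. -/
def IsHWModule (G : GradedDhatModule N V) : Prop :=
  ∃ v : V, G.IsHWVector v ∧
    ∀ U : Submodule ℂ V, G.toDhatModule.IsSub U → v ∈ U → U = ⊤

/-- A lowest weight module: generated by a lowest weight vector. -/
def IsLWModule (G : GradedDhatModule N V) : Prop :=
  ∃ v : V, G.IsLWVector v ∧
    ∀ U : Submodule ℂ V, G.toDhatModule.IsSub U → v ∈ U → U = ⊤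

end GradedDhatModule

section AuxLemmas

lemma dfall_zero' (b : ℤ) : dfall b 0 = 1 := by simp [dfall]

lemma dfall_one_succ_succ (s : ℕ) : dfall 1 (s + 2) = 0 := by
  apply Finset.prod_eq_zero (i := 1) (by simp)
  simp

/-- Key commutation relation derived from the bracket: if `t v₀ = 0` then
`t (ρ b l B v₀) = -l • ρ b (l-1) B v₀` (as long as no central term appears). -/
lemma DhatModule.t_rel {N : ℕ} {V : Type*} [AddCommGroup V] [Module ℂ V]
    (M : DhatModule N V) (v₀ : V) (ht : M.ρ 1 0 1 v₀ = 0)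
    (b : ℤ) (l : ℕ) (B : Matrix (Fin N) (Fin N) ℂ) (hb : (1 : ℤ) + b ≠ (l : ℤ)) :
    M.ρ 1 0 1 (M.ρ b l B v₀) = (-(l : ℂ)) • M.ρ b (l - 1) B v₀ := by
  have hc : cocycleCoeff 1 0 b l = 0 := by
    rw [cocycleCoeff, if_neg]
    intro hcon
    exact hb (by push_cast at hcon ⊢; linarith)
  have h := M.bracket_rel 1 0 1 b l B
  have hsum1 : (∑ s ∈ Finset.range (0 + 1),
      ((Nat.choose 0 s : ℂ) * (dfall b s : ℂ)) • M.ρ (1 + b - (s : ℤ)) (0 + l - s)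
        ((1 : Matrix (Fin N) (Fin N) ℂ) * B)) = M.ρ (1 + b) l B := by
    simp [dfall]
  have hsum2 : (∑ s ∈ Finset.range (l + 1),
      ((Nat.choose l s : ℂ) * (dfall 1 s : ℂ)) • M.ρ (1 + b - (s : ℤ)) (0 + l - s)
        (B * (1 : Matrix (Fin N) (Fin N) ℂ)))
      = M.ρ (1 + b) l B + (l : ℂ) • M.ρ b (l - 1) B := by
    cases l with
    | zero => simp [dfall]
    | succ k =>
      rw [Finset.sum_range_succ', Finset.sum_range_succ']
      have hz : (∑ s ∈ Finset.range k,
          ((Nat.choose (k + 1) (s + 1 + 1) : ℂ) * (dfall 1 (s + 1 + 1) : ℂ)) •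
            M.ρ (1 + b - ((s + 1 + 1 : ℕ) : ℤ)) (0 + (k + 1) - (s + 1 + 1))
              (B * (1 : Matrix (Fin N) (Fin N) ℂ))) = 0 := by
        apply Finset.sum_eq_zero
        intro s _
        rw [show (s + 1 + 1) = s + 2 by ring, dfall_one_succ_succ]
        simp
      rw [hz, zero_add]
      have e1 : (1 : ℤ) + b - ((0 + 1 : ℕ) : ℤ) = b := by push_cast; ring
      have e2 : 0 + (k + 1) - (0 + 1) = k := by omega
      have e3 : dfall 1 (0 + 1) = 1 := by simp [dfall]
      rw [e1, e2, e3]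
      simp [dfall, Nat.choose_one_right, mul_comm]
      abel
  rw [hsum1, hsum2, hc] at h
  have h2 := LinearMap.congr_fun h v₀
  simp only [LinearMap.sub_apply, Module.End.mul_apply, LinearMap.add_apply,
    LinearMap.smul_apply, ht, map_zero, zero_mul, zero_smul, LinearMap.zero_apply,
    add_zero, sub_zero] at h2
  rw [h2]
  module

end AuxLemmas

/-- If `V` is a quasifinite `𝒟̂^N`-module and `v₀ ∈ V₀` is a nonzero vector with `t v₀ = 0`
(where `t = t¹D⁰I`), then there is an integer `n > 0` such that `(𝒟̂^N)_j v₀ = 0` for all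
`j ≥ nN`. -/
theorem killed_by_t_implies_killed_by_high_degree (N : ℕ) (hN : 1 ≤ N)
    (V : Type*) [AddCommGroup V] [Module ℂ V]
    (G : GradedDhatModule N V) (hqf : G.IsQuasifinite)
    (v₀ : V) (hv₀ : v₀ ∈ G.grade 0) (hne : v₀ ≠ 0) (ht : G.ρ 1 0 1 v₀ = 0) :
    ∃ n : ℕ, 0 < n ∧ ∀ (a : ℤ) (j : ℕ) (p q : Fin N),
      ((n : ℤ) * (N : ℤ)) ≤ gdeg N a j p q →
      G.ρ a j (Matrix.single p q 1) v₀ = 0 := by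
  classical
  have main : ∀ p q : Fin N, ∃ m₀ : ℕ, ∀ m : ℕ, m₀ ≤ m → ∀ j : ℕ,
      G.ρ ((m : ℤ) + (j : ℤ)) j (Matrix.single p q 1) v₀ = 0 := by
    intro p q
    set E : Matrix (Fin N) (Fin N) ℂ := Matrix.single p q 1 with hE
    set w : ℕ → ℕ → V := fun m j => G.ρ ((m : ℤ) + (j : ℤ)) j E v₀ with hw
    set U : ℕ → Submodule ℂ V := fun m => Submodule.span ℂ (Set.range (w m)) with hU
    set tE : Module.End ℂ V := G.ρ 1 0 1 with htE
    -- each U m lies in a single graded piece, hence is finite dimensional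
    have hUgrade : ∀ m : ℕ, U m ≤ G.grade ((m : ℤ) * (N : ℤ) + (p.val : ℤ) - (q.val : ℤ)) := by
      intro m
      rw [hU]
      apply Submodule.span_le.2
      rintro _ ⟨j, rfl⟩
      have h := G.grade_ρ ((m : ℤ) + (j : ℤ)) j p q 0 v₀ hv₀
      have e : (0 : ℤ) + gdeg N ((m : ℤ) + (j : ℤ)) j p q
          = (m : ℤ) * (N : ℤ) + (p.val : ℤ) - (q.val : ℤ) := by
        rw [gdeg]; ring
      rw [e] at h
      exact h
    have hUfd : ∀ m : ℕ, FiniteDimensional ℂ (U m) := by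
      intro m
      haveI := hqf ((m : ℤ) * (N : ℤ) + (p.val : ℤ) - (q.val : ℤ))
      exact Submodule.finiteDimensional_of_le (hUgrade m)
    -- the action of t on the generating vectors
    have htw : ∀ (m j : ℕ), tE (w m (j + 1)) = (-((j : ℂ) + 1)) • w (m + 1) j := by
      intro m j
      have hb : (1 : ℤ) + ((m : ℤ) + ((j : ℕ) + 1 : ℕ)) ≠ (((j : ℕ) + 1 : ℕ) : ℤ) := by
        push_cast; omega
      have h := G.toDhatModule.t_rel v₀ ht ((m : ℤ) + ((j : ℕ) + 1 : ℕ)) (j + 1) E hb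
      have e1 : ((m : ℤ) + ((j : ℕ) + 1 : ℕ)) = (((m + 1 : ℕ) : ℤ) + (j : ℤ)) := by
        push_cast; ring
      show G.ρ 1 0 1 ((G.ρ ((m : ℤ) + ((j + 1 : ℕ) : ℤ)) (j + 1) E) v₀)
          = (-((j : ℂ) + 1)) • (G.ρ (((m + 1 : ℕ) : ℤ) + (j : ℤ)) j E) v₀
      rw [h, e1]
      congr 1
      push_cast
      ring
    have htw0 : ∀ m : ℕ, tE (w m 0) = 0 := by
      intro m
      have hb : (1 : ℤ) + ((m : ℤ) + ((0 : ℕ) : ℤ)) ≠ (((0 : ℕ)) : ℤ) := by push_cast; omega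
      have h := G.toDhatModule.t_rel v₀ ht ((m : ℤ) + ((0 : ℕ) : ℤ)) 0 E hb
      show G.ρ 1 0 1 (G.ρ ((m : ℤ) + ((0 : ℕ) : ℤ)) 0 E v₀) = 0
      simpa using h
    -- t maps U m onto (at least) U (m+1)
    have hsurj : ∀ m : ℕ, U (m + 1) ≤ (U m).map tE := by
      intro m
      rw [hU]
      apply Submodule.span_le.2
      rintro _ ⟨j, rfl⟩
      have hj : ((j : ℂ) + 1) ≠ 0 := Nat.cast_add_one_ne_zero j
      refine ⟨(-(1 / ((j : ℂ) + 1))) • w m (j + 1), ?_, ?_⟩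
      · exact Submodule.smul_mem _ _ (Submodule.subset_span ⟨j + 1, rfl⟩)
      · rw [map_smul, htw m j, smul_smul]
        have : (-(1 / ((j : ℂ) + 1))) * (-((j : ℂ) + 1)) = 1 := by
          field_simp
        rw [this, one_smul]
    -- dimensions are nonincreasing
    have hmono : ∀ m : ℕ, Module.finrank ℂ (U (m + 1)) ≤ Module.finrank ℂ (U m) := by
      intro m
      haveI := hUfd m
      haveI : Module.Finite ℂ ((U m).map tE) := Module.Finite.map _ _
      exact le_trans (Submodule.finrank_mono (hsurj m)) (Submodule.finrank_map_le tE (U m))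
    -- stabilization
    obtain ⟨m₀, hm₀⟩ : ∃ m₀ : ℕ, ∀ m : ℕ, m₀ ≤ m →
        Module.finrank ℂ (U m) = Module.finrank ℂ (U m₀) := by
      have hanti : Antitone (fun m => Module.finrank ℂ (U m)) :=
        antitone_nat_of_succ_le hmono
      have hne' : (Set.range fun m => Module.finrank ℂ (U m)).Nonempty := ⟨_, ⟨0, rfl⟩⟩
      obtain ⟨m₀, hm₀⟩ := Nat.sInf_mem hne'
      refine ⟨m₀, fun m hm => ?_⟩
      have h1 : Module.finrank ℂ (U m) ≤ Module.finrank ℂ (U m₀) := hanti hm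
      have h2 : sInf (Set.range fun m => Module.finrank ℂ (U m)) ≤ Module.finrank ℂ (U m) :=
        Nat.sInf_le ⟨m, rfl⟩
      have h3 : Module.finrank ℂ (U m₀) = sInf (Set.range fun m => Module.finrank ℂ (U m)) := hm₀
      omega
    -- injectivity of t on U m for m ≥ m₀
    have hinj : ∀ m : ℕ, m₀ ≤ m → ∀ x, x ∈ U m → tE x = 0 → x = 0 := by
      intro m hm x hx hxt
      haveI := hUfd m
      set g : (U m) →ₗ[ℂ] V := tE ∘ₗ (U m).subtype with hg
      have hrange : LinearMap.range g = (U m).map tE := by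
        rw [hg, LinearMap.range_comp, Submodule.range_subtype]
      haveI : Module.Finite ℂ ((U m).map tE) := Module.Finite.map _ _
      have h1 : Module.finrank ℂ (LinearMap.range g) + Module.finrank ℂ (LinearMap.ker g)
          = Module.finrank ℂ (U m) := LinearMap.finrank_range_add_finrank_ker g
      have h2 : Module.finrank ℂ (U (m + 1)) ≤ Module.finrank ℂ (LinearMap.range g) := by
        rw [hrange]
        exact Submodule.finrank_mono (hsurj m)
      have h3 : Module.finrank ℂ (U m) = Module.finrank ℂ (U (m + 1)) := by
        rw [hm₀ m hm, hm₀ (m + 1) (by omega)]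
      have hrle : Module.finrank ℂ (LinearMap.range g) ≤ Module.finrank ℂ (U m) := by
        rw [hrange]
        exact Submodule.finrank_map_le tE (U m)
      have hker : Module.finrank ℂ (LinearMap.ker g) = 0 := by omega
      have hkerbot : LinearMap.ker g = ⊥ := Submodule.finrank_eq_zero.mp hker
      have hxmem : (⟨x, hx⟩ : U m) ∈ LinearMap.ker g := by
        rw [LinearMap.mem_ker, hg]
        simpa using hxt
      rw [hkerbot, Submodule.mem_bot] at hxmem
      exact congrArg Subtype.val hxmem
    -- induction: all generators vanish
    have hall : ∀ j : ℕ, ∀ m : ℕ, m₀ ≤ m → w m j = 0 := by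
      intro j
      induction j with
      | zero =>
        intro m hm
        exact hinj m hm (w m 0) (Submodule.subset_span ⟨0, rfl⟩) (htw0 m)
      | succ k ihk =>
        intro m hm
        apply hinj m hm (w m (k + 1)) (Submodule.subset_span ⟨k + 1, rfl⟩)
        rw [htw m k, ihk (m + 1) (by omega), smul_zero]
    exact ⟨m₀, fun m hm j => hall j m hm⟩
  choose F hF using main
  set n : ℕ := (Finset.univ.sup fun pq : Fin N × Fin N => F pq.1 pq.2) + 1 with hn
  refine ⟨n, Nat.succ_pos _, ?_⟩
  intro a j p q hdeg
  rw [gdeg] at hdeg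
  have hNpos : (0 : ℤ) < (N : ℤ) := by exact_mod_cast Nat.lt_of_lt_of_le Nat.zero_lt_one hN
  have hq : (0 : ℤ) ≤ (q.val : ℤ) := Int.ofNat_nonneg _
  have hp : ((p.val : ℤ)) < (N : ℤ) := by exact_mod_cast p.isLt
  have h2 : (n : ℤ) ≤ a - (j : ℤ) := by
    by_contra hcon
    push_neg at hcon
    have h4 : a - (j : ℤ) ≤ (n : ℤ) - 1 := by omega
    have h5 : (a - (j : ℤ)) * (N : ℤ) ≤ ((n : ℤ) - 1) * (N : ℤ) :=
      mul_le_mul_of_nonneg_right h4 (le_of_lt hNpos)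
    have h6 : ((n : ℤ) - 1) * (N : ℤ) = (n : ℤ) * (N : ℤ) - (N : ℤ) := by ring
    linarith
  have hnn : (0 : ℤ) ≤ a - (j : ℤ) := le_trans (by positivity) h2
  set m : ℕ := (a - (j : ℤ)).toNat with hm
  have hmz : (m : ℤ) = a - (j : ℤ) := Int.toNat_of_nonneg hnn
  have hmn : (n : ℤ) ≤ (m : ℤ) := by omega
  have hFle : F p q ≤ m := by
    have h6 : F p q ≤ Finset.univ.sup fun pq : Fin N × Fin N => F pq.1 pq.2 :=
      Finset.le_sup (f := fun pq : Fin N × Fin N => F pq.1 pq.2) (Finset.mem_univ (p, q))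
    have h7 : n ≤ m := by exact_mod_cast hmn
    omega
  have h8 := hF p q m hFle j
  have e : (m : ℤ) + (j : ℤ) = a := by omega
  rw [e] at h8
  exact h8
end
end

section
/- For every integer j > 0, writing j = kN + s with k ≥ 0 and 0 ≤ s < N, the graded component (𝒟̂^N)_j of the principal ℤ-gradation satisfies (𝒟̂^N)_j ⊆ (ad t)^k((𝒟̂^N)_{[0,N)}), where (𝒟̂^N)_{[0,N)} = ⊕_{0 ≤ i < N}(𝒟̂^N)_i and t = t¹D⁰I. In particular the positive part (𝒟̂^N)_+ is generated by the adjoint action of t on (𝒟̂^N)_{[0,N)}. -/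
noncomputable section

open scoped BigOperators

/-- The underlying space `ℂ^N[t,t⁻¹]`; the coefficient of `t^k` is stored at index `k`. -/
abbrev MN (N : ℕ) : Type := ℤ →₀ (Fin N → ℂ)

/-- The operator `t^i D^j A` on `ℂ^N[t,t⁻¹]` (where `D = t d/dt`):
`t^i D^j A ⬝ (t^k v) = k^j t^{i+k} (A v)`.  This realizes `𝒟^N` faithfully as operators. -/
def gen (N : ℕ) (i : ℤ) (j : ℕ) (A : Matrix (Fin N) (Fin N) ℂ) : Module.End ℂ (MN N) :=
  Finsupp.lsum ℂ fun k : ℤ => (Finsupp.lsingle (k + i)) ∘ₗ (((k : ℂ) ^ j) • A.mulVecLin)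

/-- The linear functional `x ↦ ψ(t, x)` on operators, where `ψ` is the `2`-cocycle defining
`𝒟̂^N`: it extracts `tr A` from the `t^{-1} D^0 A` component of `x`. -/
def tauL (N : ℕ) : Module.End ℂ (MN N) →ₗ[ℂ] ℂ :=
  ∑ p : Fin N,
    ((LinearMap.proj p : (Fin N → ℂ) →ₗ[ℂ] ℂ) ∘ₗ
      (Finsupp.lapply (-1 : ℤ) : MN N →ₗ[ℂ] (Fin N → ℂ)) ∘ₗ
      (LinearMap.applyₗ (Finsupp.single (0 : ℤ) (Pi.single p 1)) :
        Module.End ℂ (MN N) →ₗ[ℂ] MN N))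

attribute [local instance 100] LieRing.ofAssociativeRing

/-- The adjoint action `ad t` of `t = t¹D⁰I` on `𝒟̂^N = 𝒟^N ⊕ ℂ C`, realized on
`(operators) × ℂ`:  `ad t (x, c) = ([t, x], ψ(t, x))`. -/
def adt (N : ℕ) : Module.End ℂ (Module.End ℂ (MN N) × ℂ) :=
  LinearMap.prod
    ((LieAlgebra.ad ℂ (Module.End ℂ (MN N)) (gen N 1 0 1)) ∘ₗ
      LinearMap.fst ℂ (Module.End ℂ (MN N)) ℂ)
    ((tauL N) ∘ₗ LinearMap.fst ℂ (Module.End ℂ (MN N)) ℂ)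

/-- The graded component of degree `d` of the principal `ℤ`-gradation of
`𝒟̂^N = 𝒟^N ⊕ ℂ C`, spanned by the `t^k D^j E_{p,q}` with `kN + p - q = d`, together with
the central element `C` in degree `0`. -/
def DhatGrade (N : ℕ) (d : ℤ) : Submodule ℂ (Module.End ℂ (MN N) × ℂ) :=
  Submodule.span ℂ
    ({z : Module.End ℂ (MN N) × ℂ | ∃ (k : ℤ) (j : ℕ) (p q : Fin N),
        k * (N : ℤ) + (p.val : ℤ) - (q.val : ℤ) = d ∧
        z = (gen N k j (Matrix.single p q 1), (0 : ℂ))} ∪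
      (if d = 0 then {((0 : Module.End ℂ (MN N)), (1 : ℂ))} else (∅ : Set _)))

/-- `(𝒟̂^N)_{[0,N)}`: the sum of the graded components of degrees `0 ≤ d < N`. -/
def DhatLow (N : ℕ) : Submodule ℂ (Module.End ℂ (MN N) × ℂ) :=
  ⨆ d ∈ Finset.Ico (0 : ℤ) (N : ℤ), DhatGrade N d

lemma gen_single (N : ℕ) (i : ℤ) (j : ℕ) (A : Matrix (Fin N) (Fin N) ℂ) (k : ℤ) (v : Fin N → ℂ) :
    gen N i j A (Finsupp.single k v) = Finsupp.single (k + i) (((k:ℂ)^j) • A.mulVec v) := by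
  simp only [gen, Finsupp.lsum_single, LinearMap.comp_apply, LinearMap.smul_apply,
    Matrix.mulVecLin_apply, Finsupp.lsingle_apply]

lemma applyl_eq {M M₂ : Type*} [AddCommMonoid M] [AddCommMonoid M₂] [Module ℂ M] [Module ℂ M₂]
    (v : M) (f : M →ₗ[ℂ] M₂) : LinearMap.applyₗ v f = f v := rfl

lemma tauL_gen (N : ℕ) (m : ℤ) (hm : 0 ≤ m) (j : ℕ) (A : Matrix (Fin N) (Fin N) ℂ) :
    tauL N (gen N m j A) = 0 := by
  simp only [tauL, LinearMap.sum_apply, LinearMap.comp_apply, applyl_eq, gen_single,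
    Finsupp.lapply_apply, zero_add]
  have h : ∀ p : Fin N,
      (Finsupp.single m ((((0:ℤ):ℂ))^j • A.mulVec (Pi.single p 1))) (-1) = (0 : Fin N → ℂ) := by
    intro p
    rw [Finsupp.single_apply_eq_zero]
    intro h; omega
  rw [Finset.sum_congr rfl (fun p _ => by rw [h p])]
  simp

lemma bracket_gen (N : ℕ) (m : ℤ) (j : ℕ) (A : Matrix (Fin N) (Fin N) ℂ) :
    ⁅gen N 1 0 1, gen N m (j+1) A⁆ =
      - ∑ l ∈ Finset.range (j+1), (((j+1).choose l : ℂ)) • gen N (m+1) l A := by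
  have hlie : ⁅gen N 1 0 1, gen N m (j+1) A⁆ =
      gen N 1 0 1 * gen N m (j+1) A - gen N m (j+1) A * gen N 1 0 1 := rfl
  apply Finsupp.lhom_ext
  intro k v
  have hpow : ((k:ℂ))^(j+1) - ((k:ℂ)+1)^(j+1)
      = - ∑ l ∈ Finset.range (j+1), ((j+1).choose l : ℂ) * (k:ℂ)^l := by
    have h := add_pow (k:ℂ) 1 (j+1)
    simp only [one_pow, mul_one] at h
    rw [h, Finset.sum_range_succ, Nat.choose_self, Nat.cast_one, mul_one,
      Finset.sum_congr rfl (fun l _ => mul_comm ((k:ℂ)^l) (((j+1).choose l : ℂ)))]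
    ring
  have lhs : (⁅gen N 1 0 1, gen N m (j+1) A⁆ : Module.End ℂ (MN N)) (Finsupp.single k v)
      = Finsupp.single (k + m + 1) ((((k:ℂ))^(j+1) - ((k:ℂ)+1)^(j+1)) • A.mulVec v) := by
    rw [hlie]
    simp only [LinearMap.sub_apply, Module.End.mul_apply, gen_single, pow_zero, one_smul,
      Matrix.one_mulVec, Matrix.mulVec_smul, Int.cast_add, Int.cast_one]
    rw [show k + 1 + m = k + m + 1 by ring, sub_smul, Finsupp.single_sub]
  rw [lhs, hpow]
  simp only [LinearMap.neg_apply, LinearMap.sum_apply, LinearMap.smul_apply, gen_single,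
    Finsupp.smul_single, smul_smul]
  rw [neg_smul, Finsupp.single_neg, ← Finsupp.single_finset_sum,
    show k + (m+1) = k + m + 1 by ring, Finset.sum_smul]

lemma adt_gen (N : ℕ) (m : ℤ) (hm : 0 ≤ m) (j : ℕ) (A : Matrix (Fin N) (Fin N) ℂ) :
    adt N (gen N m (j+1) A, (0:ℂ)) =
      - ∑ l ∈ Finset.range (j+1), (((j+1).choose l : ℂ)) •
        ((gen N (m+1) l A, (0:ℂ)) : Module.End ℂ (MN N) × ℂ) := by
  have h1 : adt N (gen N m (j+1) A, (0:ℂ))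
      = (⁅gen N 1 0 1, gen N m (j+1) A⁆, tauL N (gen N m (j+1) A)) := rfl
  rw [h1, tauL_gen N m hm, bracket_gen]
  apply Prod.ext <;> simp [Prod.fst_sum, Prod.snd_sum]

/-- span of the `gen N m j' A` over all `j'` (as pairs with `0`). -/
def Tsp (N : ℕ) (m : ℤ) (A : Matrix (Fin N) (Fin N) ℂ) : Submodule ℂ (Module.End ℂ (MN N) × ℂ) :=
  Submodule.span ℂ {z | ∃ j' : ℕ, z = (gen N m j' A, (0:ℂ))}


lemma negmem {N : ℕ} (p : Submodule ℂ (Module.End ℂ (MN N) × ℂ))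
    {x : Module.End ℂ (MN N) × ℂ} (h : x ∈ p) : -x ∈ p := by
  have h2 := p.smul_mem (-1 : ℂ) h
  have h3 : -x = (-1 : ℂ) • x := (neg_one_smul ℂ x).symm
  rw [h3]
  exact h2

lemma submem {N : ℕ} (p : Submodule ℂ (Module.End ℂ (MN N) × ℂ))
    {x y : Module.End ℂ (MN N) × ℂ} (hx : x ∈ p) (hy : y ∈ p) : x - y ∈ p := by
  have h3 : x - y = x + -y := sub_eq_add_neg x y
  rw [h3]
  exact p.add_mem hx (negmem p hy)

set_option maxHeartbeats 1000000 in
lemma gen_mem_map (N : ℕ) (m : ℤ) (hm : 0 ≤ m) (A : Matrix (Fin N) (Fin N) ℂ) (j : ℕ) :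
    ((gen N (m+1) j A, (0:ℂ)) : Module.End ℂ (MN N) × ℂ)
      ∈ Submodule.map (adt N) (Tsp N m A) := by
  induction j using Nat.strong_induction_on with
  | _ j ih =>
    have hgen : ∀ j' : ℕ, (∑ l ∈ Finset.range (j'+1), (((j'+1).choose l : ℂ)) •
        ((gen N (m+1) l A, (0:ℂ)) : Module.End ℂ (MN N) × ℂ))
          ∈ Submodule.map (adt N) (Tsp N m A) := by
      intro j'
      have h5 : adt N (gen N m (j'+1) A, (0:ℂ)) ∈ Submodule.map (adt N) (Tsp N m A) :=
        ⟨_, Submodule.subset_span ⟨j'+1, rfl⟩, rfl⟩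
      rw [adt_gen N m hm] at h5
      have e : (∑ l ∈ Finset.range (j'+1), (((j'+1).choose l : ℂ)) •
          ((gen N (m+1) l A, (0:ℂ)) : Module.End ℂ (MN N) × ℂ))
          = - - (∑ l ∈ Finset.range (j'+1), (((j'+1).choose l : ℂ)) •
          ((gen N (m+1) l A, (0:ℂ)) : Module.End ℂ (MN N) × ℂ)) := (neg_neg (G := Module.End ℂ (MN N) × ℂ) _).symm
      rw [e]
      exact negmem _ h5
    have key : ((j:ℂ)+1) • ((gen N (m+1) j A, (0:ℂ)) : Module.End ℂ (MN N) × ℂ)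
        ∈ Submodule.map (adt N) (Tsp N m A) := by
      have h2 : (∑ l ∈ Finset.range j, (((j+1).choose l : ℂ)) •
          ((gen N (m+1) l A, (0:ℂ)) : Module.End ℂ (MN N) × ℂ))
            ∈ Submodule.map (adt N) (Tsp N m A) :=
        sum_mem (fun l hl =>
          Submodule.smul_mem _ _ (ih l (Finset.mem_range.mp hl)))
      have e : ((j:ℂ)+1) • ((gen N (m+1) j A, (0:ℂ)) : Module.End ℂ (MN N) × ℂ)
          = (∑ l ∈ Finset.range (j+1), (((j+1).choose l : ℂ)) •
              ((gen N (m+1) l A, (0:ℂ)) : Module.End ℂ (MN N) × ℂ))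
            - ∑ l ∈ Finset.range j, (((j+1).choose l : ℂ)) •
              ((gen N (m+1) l A, (0:ℂ)) : Module.End ℂ (MN N) × ℂ) := by
        rw [Finset.sum_range_succ, Nat.choose_succ_self_right]
        push_cast
        abel
      rw [e]
      exact submem _ (hgen j) h2
    have h4 := Submodule.smul_mem (Submodule.map (adt N) (Tsp N m A)) (((j:ℂ)+1)⁻¹) key
    have e2 : ((gen N (m+1) j A, (0:ℂ)) : Module.End ℂ (MN N) × ℂ)
        = (((j:ℂ)+1)⁻¹) • ((j:ℂ)+1) • ((gen N (m+1) j A, (0:ℂ)) : Module.End ℂ (MN N) × ℂ) := by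
      rw [smul_smul, inv_mul_cancel₀ (Nat.cast_add_one_ne_zero j), one_smul]
    rw [e2]
    exact h4

lemma grade_step (N : ℕ) (hN : 1 ≤ N) (d : ℤ) (hd : 0 ≤ d) :
    DhatGrade N (d + N) ≤ Submodule.map (adt N) (DhatGrade N d) := by
  rw [DhatGrade, Submodule.span_le]
  rintro z (⟨k, j, p, q, hdeg, rfl⟩ | hz)
  · -- k ≥ 1
    have hp : (p.val : ℤ) < N := by exact_mod_cast p.isLt
    have hq : (0 : ℤ) ≤ (q.val : ℤ) := Int.ofNat_nonneg _
    have hk : 1 ≤ k := by nlinarith [hdeg]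
    have hmem := gen_mem_map N (k - 1) (by omega) (Matrix.single p q 1) j
    rw [sub_add_cancel] at hmem
    refine Submodule.map_mono ?_ hmem
    rw [Tsp, Submodule.span_le]
    rintro w ⟨j', rfl⟩
    apply Submodule.subset_span
    left
    exact ⟨k - 1, j', p, q, by push_cast; linarith [hdeg], rfl⟩
  · exfalso
    have : ¬ (d + (N : ℤ) = 0) := by omega
    rw [if_neg this] at hz
    exact hz

lemma grade_pow (N : ℕ) (hN : 1 ≤ N) (k : ℕ) (s : ℤ) (hs : 0 ≤ s) :
    DhatGrade N ((k : ℤ) * N + s) ≤ Submodule.map ((adt N) ^ k) (DhatGrade N s) := by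
  induction k with
  | zero => exact fun x hx => ⟨x, by simpa using hx, rfl⟩
  | succ k ih =>
    have h1 : ((k+1 : ℕ) : ℤ) * N + s = ((k : ℤ) * N + s) + N := by push_cast; ring
    rw [h1]
    refine le_trans (grade_step N hN _ (by positivity)) ?_
    refine le_trans (Submodule.map_mono ih) ?_
    rw [pow_succ']
    rw [Module.End.mul_eq_comp, Submodule.map_comp]

lemma grade_le_low (N : ℕ) (s : ℤ) (h0 : 0 ≤ s) (h1 : s < N) : DhatGrade N s ≤ DhatLow N := by
  rw [DhatLow]
  exact le_iSup₂ (f := fun d _ => DhatGrade N d) s (Finset.mem_Ico.mpr ⟨h0, h1⟩)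

/-- For every integer `d > 0`, writing `d = kN + s` with `k ≥ 0` and `0 ≤ s < N`, one has
`(𝒟̂^N)_d ⊆ (ad t)^k ((𝒟̂^N)_{[0,N)})`.  In particular the positive part of `𝒟̂^N` is
generated by the adjoint action of `t = t¹D⁰I` on `(𝒟̂^N)_{[0,N)}`. -/
theorem positive_part_generated_by_adt (N : ℕ) (hN : 1 ≤ N) :
    (∀ d : ℤ, 0 < d → ∀ (k s : ℕ), (s : ℤ) < (N : ℤ) → d = (k : ℤ) * (N : ℤ) + (s : ℤ) →
      DhatGrade N d ≤ Submodule.map ((adt N) ^ k) (DhatLow N)) ∧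
    (∀ d : ℤ, 0 < d →
      DhatGrade N d ≤ ⨆ k : ℕ, Submodule.map ((adt N) ^ k) (DhatLow N)) := by
  have part1 : ∀ d : ℤ, 0 < d → ∀ (k s : ℕ), (s : ℤ) < (N : ℤ) → d = (k : ℤ) * (N : ℤ) + (s : ℤ) →
      DhatGrade N d ≤ Submodule.map ((adt N) ^ k) (DhatLow N) := by
    intro d _ k s hs hd2
    have h1 : DhatGrade N d ≤ Submodule.map ((adt N)^k) (DhatGrade N s) := by
      rw [hd2]; exact grade_pow N hN k s (Int.ofNat_nonneg s)
    exact le_trans h1 (Submodule.map_mono (grade_le_low N s (Int.ofNat_nonneg s) hs))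
  refine ⟨part1, ?_⟩
  intro d hd
  have hN0 : (0:ℤ) < N := by exact_mod_cast hN
  set k := (d / N).toNat with hk
  set s := (d % N).toNat with hs
  have hsm : (s:ℤ) = d % N := Int.toNat_of_nonneg (Int.emod_nonneg d (by omega))
  have hkk : (k:ℤ) = d / N := Int.toNat_of_nonneg (Int.ediv_nonneg (le_of_lt hd) (le_of_lt hN0))
  have hdm := Int.mul_ediv_add_emod d N
  have hd2 : d = (k:ℤ) * N + s := by
    rw [hkk, hsm]
    nlinarith [hdm]
  have hslt : (s:ℤ) < N := by rw [hsm]; exact Int.emod_lt_of_pos d hN0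
  exact le_trans (part1 d hd k s hslt hd2)
    (le_iSup (fun k => Submodule.map ((adt N)^k) (DhatLow N)) k)
end
end
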